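/- arXiv:1801.06041 — 3 statements merged into one kernel-verified Lean document; each statement's English description precedes it below -/
import Mathlib

section
/- If an array A is a (t+1)-constrained covering array with 0 ≤ t < k, then A is a (1̄, t̄)-constrained locating array. -/
def Test (k : ℕ) := Fin k → ℕ

def Interaction (k : ℕ) := Fin k → Option ℕ

/-- A test covers an interaction iff it extends it. -/
def Covers {k : ℕ} (σ : Test k) (T : Interaction k) : Prop :=
  ∀ i v, T i = some v → σ i = v

/-- Strength of an interaction: number of factors it assigns. -/
def strength {k : ℕ} (T : Interaction k) : ℕ :=
  (Finset.univ.filter (fun i => (T i).isSome)).card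

/-- Set of rows (indices) of array `A` covering interaction `T`. -/
def rho {k : ℕ} (A : List (Test k)) (T : Interaction k) : Set ℕ :=
  {n | ∃ h : n < A.length, Covers (A.get ⟨n, h⟩) T}

def rhoSet {k : ℕ} (A : List (Test k)) (𝒯 : Set (Interaction k)) : Set ℕ :=
  ⋃ T ∈ 𝒯, rho A T

/-- An array all of whose rows are valid tests. -/
def ValidArray {k : ℕ} (valid : Test k → Prop) (A : List (Test k)) : Prop :=
  ∀ σ ∈ A, valid σ

/-- A valid interaction: one covered by some valid test. -/
def ValidInt {k : ℕ} (valid : Test k → Prop) (T : Interaction k) : Prop :=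
  ∃ σ, valid σ ∧ Covers σ T

/-- Two sets of interactions are distinguishable iff some array of valid tests
separates their ρ-values. -/
def Distinguishable {k : ℕ} (valid : Test k → Prop) (𝒯₁ 𝒯₂ : Set (Interaction k)) : Prop :=
  ∃ A : List (Test k), ValidArray valid A ∧ rhoSet A 𝒯₁ ≠ rhoSet A 𝒯₂

def rhoFin {k : ℕ} (A : List (Test k)) (𝒯 : Finset (Interaction k)) : Set ℕ :=
  rhoSet A ↑𝒯

/-- A is an s-CCA: every valid s-way interaction is covered by some row. -/
def IsCCA {k : ℕ} (valid : Test k → Prop) (s : ℕ) (A : List (Test k)) : Prop :=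
  ValidArray valid A ∧
  ∀ T : Interaction k, ValidInt valid T → strength T = s → rho A T ≠ ∅

/-- A is a (1̄,t̄)-constrained locating array. -/
def IsCLAbar1bart {k : ℕ} (valid : Test k → Prop) (t : ℕ) (A : List (Test k)) : Prop :=
  ValidArray valid A ∧
  ∀ 𝒯₁ 𝒯₂ : Finset (Interaction k),
    (∀ T ∈ 𝒯₁, ValidInt valid T ∧ strength T ≤ t) →
    (∀ T ∈ 𝒯₂, ValidInt valid T ∧ strength T ≤ t) →
    𝒯₁.card ≤ 1 → 𝒯₂.card ≤ 1 →
    Distinguishable valid ↑𝒯₁ ↑𝒯₂ →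
    rhoFin A 𝒯₁ ≠ rhoFin A 𝒯₂

/-- Key lemma: extend a low-strength interaction along a covering valid test to
strength `t+1` including coordinate `i`, then use the CCA property. -/
lemma keyCCA {k : ℕ} {valid : Test k → Prop} {t : ℕ} (ht : t < k) {A : List (Test k)}
    (h : IsCCA valid (t + 1) A) (T : Interaction k) (σ : Test k) (hσ : valid σ)
    (hc : Covers σ T) (hs : strength T ≤ t) (i : Fin k) :
    ∃ n, ∃ hn : n < A.length, Covers (A.get ⟨n, hn⟩) T ∧ (A.get ⟨n, hn⟩) i = σ i := by
  classical
  set D : Finset (Fin k) := Finset.univ.filter (fun j => (T j).isSome) with hD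
  have hDins : (insert i D).card ≤ t + 1 := by
    calc (insert i D).card ≤ D.card + 1 := Finset.card_insert_le _ _
    _ ≤ t + 1 := by exact Nat.add_le_add_right hs 1
  have hku : t + 1 ≤ (Finset.univ : Finset (Fin k)).card := by
    simpa using Nat.succ_le_of_lt ht
  obtain ⟨S, hSsub, hSuniv, hScard⟩ :=
    Finset.exists_subsuperset_card_eq (Finset.subset_univ (insert i D)) hDins hku
  set T' : Interaction k := fun j => if j ∈ S then some (σ j) else none with hT'
  have hcov' : Covers σ T' := by
    intro j v hv
    simp only [hT'] at hv
    by_cases hj : j ∈ S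
    · simp [hj] at hv; exact hv
    · simp [hj] at hv
  have hstr : strength T' = t + 1 := by
    rw [strength, ← hScard]
    congr 1
    ext j
    by_cases hj : j ∈ S <;> simp [hT', hj]
  have hval' : ValidInt valid T' := ⟨σ, hσ, hcov'⟩
  have hne := h.2 T' hval' hstr
  obtain ⟨n, hn, hcn⟩ := Set.nonempty_iff_ne_empty.mpr hne
  refine ⟨n, hn, ?_, ?_⟩
  · intro j v hv
    have hjD : j ∈ D := by simp [hD, hv]
    have hjS : j ∈ S := hSsub (Finset.mem_insert_of_mem hjD)
    have : (A.get ⟨n, hn⟩) j = σ j := hcn j (σ j) (by simp [hT', hjS])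
    rw [this]; exact hc j v hv
  · have hiS : i ∈ S := hSsub (Finset.mem_insert_self i D)
    exact hcn i (σ i) (by simp [hT', hiS])

lemma rhoFin_mem {k : ℕ} (A : List (Test k)) (T : Interaction k) (n : ℕ) :
    n ∈ rhoFin A {T} ↔ n ∈ rho A T := by
  simp [rhoFin, rhoSet]

/-- Asymmetric core of the singleton-singleton case. -/
lemma keyNe {k : ℕ} {valid : Test k → Prop} {t : ℕ} (ht : t < k) {A : List (Test k)}
    (h : IsCCA valid (t + 1) A) (T₁ T₂ : Interaction k)
    (h1 : ValidInt valid T₁ ∧ strength T₁ ≤ t)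
    (σ : Test k) (hσ : valid σ) (hc1 : Covers σ T₁) (hc2 : ¬ Covers σ T₂) :
    rhoFin A {T₁} ≠ rhoFin A {T₂} := by
  rw [Covers] at hc2
  push_neg at hc2
  obtain ⟨i, v, hTi, hne⟩ := hc2
  obtain ⟨n, hn, hcov, hval⟩ := keyCCA ht h T₁ σ hσ hc1 h1.2 i
  intro heq
  have hmem : n ∈ rhoFin A {T₁} := (rhoFin_mem A T₁ n).mpr ⟨hn, hcov⟩
  rw [heq, rhoFin_mem] at hmem
  obtain ⟨hn', hcov'⟩ := hmem
  exact hne (hval ▸ hcov' i v hTi)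

theorem stmt8 {k : ℕ} (valid : Test k → Prop) (t : ℕ) (ht : t < k)
    (hR : ∃ σ : Test k, valid σ)
    (A : List (Test k)) (h : IsCCA valid (t + 1) A) :
    IsCLAbar1bart valid t A := by
  classical
  refine ⟨h.1, ?_⟩
  intro 𝒯₁ 𝒯₂ h1 h2 hc1 hc2 hdist
  haveI : Nonempty (Interaction k) := ⟨fun _ => none⟩
  have hsng : ∀ 𝒯 : Finset (Interaction k), 𝒯.card ≤ 1 → 𝒯 = ∅ ∨ ∃ T, 𝒯 = {T} := by
    intro 𝒯 hcard
    obtain ⟨x, hx⟩ := Finset.card_le_one_iff_subset_singleton.mp hcard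
    rcases Finset.subset_singleton_iff.mp hx with h | h
    · exact Or.inl h
    · exact Or.inr ⟨x, h⟩
  have hi : Fin k := ⟨0, lt_of_le_of_lt (Nat.zero_le t) ht⟩
  -- helper: nonempty rho for valid low-strength interaction
  have hne : ∀ T : Interaction k, ValidInt valid T → strength T ≤ t →
      ∃ n, n ∈ rhoFin A {T} := by
    intro T hTv hTs
    obtain ⟨σ, hσ, hcov⟩ := hTv
    obtain ⟨n, hn, hc, _⟩ := keyCCA ht h T σ hσ hcov hTs hi
    exact ⟨n, (rhoFin_mem A T n).mpr ⟨hn, hc⟩⟩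
  have hempty : rhoFin A (∅ : Finset (Interaction k)) = ∅ := by
    simp [rhoFin, rhoSet]
  rcases hsng 𝒯₁ hc1 with rfl | ⟨T₁, rfl⟩ <;> rcases hsng 𝒯₂ hc2 with rfl | ⟨T₂, rfl⟩
  · obtain ⟨B, _, hB⟩ := hdist
    exact absurd rfl hB
  · obtain ⟨n, hn⟩ := hne T₂ (h2 T₂ (by simp)).1 (h2 T₂ (by simp)).2
    intro heq
    rw [← heq, hempty] at hn
    exact hn
  · obtain ⟨n, hn⟩ := hne T₁ (h1 T₁ (by simp)).1 (h1 T₁ (by simp)).2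
    intro heq
    rw [heq, hempty] at hn
    exact hn
  · obtain ⟨B, hBval, hB⟩ := hdist
    have : rhoSet B ({T₁} : Finset (Interaction k)) ≠ rhoSet B ({T₂} : Finset (Interaction k)) := by
      simpa using hB
    have hex : ∃ n, (n ∈ rhoSet B ({T₁} : Finset (Interaction k)) ∧
        n ∉ rhoSet B ({T₂} : Finset (Interaction k))) ∨
        (n ∈ rhoSet B ({T₂} : Finset (Interaction k)) ∧
        n ∉ rhoSet B ({T₁} : Finset (Interaction k))) := by
      by_contra hcon
      push_neg at hcon
      exact this (Set.ext fun n => ⟨(hcon n).1, (hcon n).2⟩)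
    obtain ⟨n, hn⟩ := hex
    rcases hn with ⟨hn1, hn2⟩ | ⟨hn2, hn1⟩
    · have hn1' : n ∈ rho B T₁ := by
        have := (rhoFin_mem B T₁ n).mp hn1
        exact this
      have hn2' : n ∉ rho B T₂ := fun hx => hn2 ((rhoFin_mem B T₂ n).mpr hx)
      obtain ⟨hlen, hcov1⟩ := hn1'
      have hcov2 : ¬ Covers (B.get ⟨n, hlen⟩) T₂ := fun hx => hn2' ⟨hlen, hx⟩
      exact keyNe ht h T₁ T₂ (h1 T₁ (by simp)) _ (hBval _ (B.get_mem _)) hcov1 hcov2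
    · have hn2' : n ∈ rho B T₂ := (rhoFin_mem B T₂ n).mp hn2
      have hn1' : n ∉ rho B T₁ := fun hx => hn1 ((rhoFin_mem B T₁ n).mpr hx)
      obtain ⟨hlen, hcov2⟩ := hn2'
      have hcov1 : ¬ Covers (B.get ⟨n, hlen⟩) T₁ := fun hx => hn1' ⟨hlen, hx⟩
      exact (keyNe ht h T₂ T₁ (h2 T₂ (by simp)) _ (hBval _ (B.get_mem _)) hcov2 hcov1).symm
end

section
/- If an array A is a (1̄, t)-constrained locating array for 1 ≤ t ≤ k, then A is a (1̄, t̄)-constrained locating array. -/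
/-- A is a (1̄,t)-constrained locating array. -/
def IsCLAbar1t {k : ℕ} (valid : Test k → Prop) (t : ℕ) (A : List (Test k)) : Prop :=
  ValidArray valid A ∧
  ∀ 𝒯₁ 𝒯₂ : Finset (Interaction k),
    (∀ T ∈ 𝒯₁, ValidInt valid T ∧ strength T = t) →
    (∀ T ∈ 𝒯₂, ValidInt valid T ∧ strength T = t) →
    𝒯₁.card ≤ 1 → 𝒯₂.card ≤ 1 →
    Distinguishable valid ↑𝒯₁ ↑𝒯₂ →
    rhoFin A 𝒯₁ ≠ rhoFin A 𝒯₂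

section Aux
variable {k : ℕ}

instance : Inhabited (Interaction k) := ⟨fun _ => none⟩

lemma rhoSet_empty (A : List (Test k)) : rhoSet A (∅ : Set (Interaction k)) = ∅ := by
  simp [rhoSet]

def supp (T : Interaction k) : Finset (Fin k) :=
  Finset.univ.filter (fun i => (T i).isSome)

lemma strength_eq (T : Interaction k) : strength T = (supp T).card := rfl

lemma mem_supp {T : Interaction k} {i : Fin k} : i ∈ supp T ↔ ∃ v, T i = some v := by
  simp [supp, Option.isSome_iff_exists]

def restr (σ : Test k) (D : Finset (Fin k)) : Interaction k :=
  fun j => if j ∈ D then some (σ j) else none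

lemma covers_restr_iff {σ τ : Test k} {D : Finset (Fin k)} :
    Covers τ (restr σ D) ↔ ∀ j ∈ D, τ j = σ j := by
  constructor
  · intro h j hj; exact h j (σ j) (by simp [restr, hj])
  · intro h j v hv
    by_cases hj : j ∈ D
    · simp only [restr, if_pos hj, Option.some.injEq] at hv
      rw [h j hj, hv]
    · simp [restr, hj] at hv

lemma covers_restr_self (σ : Test k) (D : Finset (Fin k)) : Covers σ (restr σ D) :=
  covers_restr_iff.2 fun _ _ => rfl

lemma strength_restr (σ : Test k) (D : Finset (Fin k)) : strength (restr σ D) = D.card := by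
  unfold strength restr
  congr 1
  ext j
  by_cases hj : j ∈ D <;> simp [hj]

lemma covers_of_covers_restr {σ τ : Test k} {T : Interaction k} {D : Finset (Fin k)}
    (hc : Covers σ T) (hs : supp T ⊆ D) (h : Covers τ (restr σ D)) : Covers τ T := by
  intro j v hv
  have hj : j ∈ D := hs (mem_supp.2 ⟨v, hv⟩)
  rw [covers_restr_iff] at h
  rw [h j hj, hc j v hv]

lemma rho_mono {A : List (Test k)} {U T : Interaction k}
    (h : ∀ τ : Test k, Covers τ U → Covers τ T) : rho A U ⊆ rho A T := by
  rintro n ⟨hn, hc⟩; exact ⟨hn, h _ hc⟩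

lemma zero_mem_rho_single {σ : Test k} {T : Interaction k} (h : Covers σ T) :
    (0 : ℕ) ∈ rho [σ] T := ⟨by simp, h⟩

lemma rho_single_empty {σ : Test k} {T : Interaction k} (h : ¬ Covers σ T) :
    rho [σ] T = ∅ := by
  rw [Set.eq_empty_iff_forall_notMem]
  rintro n ⟨hn, hc⟩
  simp only [List.length_singleton] at hn
  interval_cases n
  exact h hc

lemma rhoFin_singleton (A : List (Test k)) (T : Interaction k) :
    rhoFin A {T} = rho A T := by
  simp [rhoFin, rhoSet]

lemma rhoFin_empty (A : List (Test k)) : rhoFin A (∅ : Finset (Interaction k)) = ∅ := by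
  simp [rhoFin, rhoSet]

lemma rhoSet_coe_singleton (A : List (Test k)) (T : Interaction k) :
    rhoSet A ↑({T} : Finset (Interaction k)) = rho A T := rhoFin_singleton A T

lemma disting_singleton {valid : Test k → Prop} {σ : Test k} {U V : Interaction k}
    (hσ : valid σ) (hU : Covers σ U) (hV : ¬ Covers σ V) :
    Distinguishable valid ↑({U} : Finset (Interaction k)) ↑({V} : Finset (Interaction k)) := by
  refine ⟨[σ], ?_, ?_⟩
  · intro τ hτ
    simp only [List.mem_singleton] at hτ
    rwa [hτ]
  · rw [rhoSet_coe_singleton, rhoSet_coe_singleton]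
    intro he
    have h0 := zero_mem_rho_single hU
    rw [he, rho_single_empty hV] at h0
    exact h0

lemma disting_empty {valid : Test k → Prop} {σ : Test k} {U : Interaction k}
    (hσ : valid σ) (hU : Covers σ U) :
    Distinguishable valid ↑({U} : Finset (Interaction k)) ↑(∅ : Finset (Interaction k)) := by
  refine ⟨[σ], ?_, ?_⟩
  · intro τ hτ
    simp only [List.mem_singleton] at hτ
    rwa [hτ]
  · rw [rhoSet_coe_singleton]
    intro he
    have h0 := zero_mem_rho_single hU
    rw [he] at h0
    simp [rhoSet] at h0

/-- If `T` is covered by some valid test and has strength at most `t`, then a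
`(1̄,t)`-CLA has at least one row covering `T`. -/
lemma rho_nonempty {valid : Test k → Prop} {t : ℕ} {A : List (Test k)}
    (h : IsCLAbar1t valid t A) (ht2 : t ≤ k)
    {T : Interaction k} (hs : strength T ≤ t) {σ : Test k} (hσ : valid σ)
    (hc : Covers σ T) : (rho A T).Nonempty := by
  obtain ⟨D, hTD, -, hDcard⟩ :=
    Finset.exists_subsuperset_card_eq (n := t) (Finset.subset_univ (supp T))
      (by rw [← strength_eq]; exact hs) (by simpa using ht2)
  have hUvalid : ValidInt valid (restr σ D) := ⟨σ, hσ, covers_restr_self σ D⟩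
  have hUs : strength (restr σ D) = t := by rw [strength_restr, hDcard]
  have hne := h.2 {restr σ D} ∅ (by simp [hUvalid, hUs]) (by simp) (by simp) (by simp)
    (disting_empty hσ (covers_restr_self σ D))
  rw [rhoFin_singleton, rhoFin_empty] at hne
  obtain ⟨n, hnlen, hncov⟩ := Set.nonempty_iff_ne_empty.2 hne
  exact ⟨n, hnlen, covers_of_covers_restr hc hTD hncov⟩

/-- Key lemma: in a `(1̄,t)`-CLA, two valid interactions of strength at most `t`
separated by a valid test have different ρ-values. -/
lemma rho_ne {valid : Test k → Prop} {t : ℕ} {A : List (Test k)}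
    (h : IsCLAbar1t valid t A) (ht2 : t ≤ k)
    {T₁ T₂ : Interaction k} (hv1 : ValidInt valid T₁) (hs1 : strength T₁ ≤ t)
    (hv2 : ValidInt valid T₂) (hs2 : strength T₂ ≤ t)
    {σ : Test k} (hσ : valid σ) (hc1 : Covers σ T₁) (hc2 : ¬ Covers σ T₂) :
    rho A T₁ ≠ rho A T₂ := by
  intro heq
  -- a common covering row
  obtain ⟨m, hmlen, hcov1⟩ := rho_nonempty h ht2 hs1 hσ hc1
  have hm2 : m ∈ rho A T₂ := by rw [← heq]; exact ⟨hmlen, hcov1⟩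
  obtain ⟨hmlen2, hcov2'⟩ := hm2
  have hcov2 : Covers (A.get ⟨m, hmlen⟩) T₂ := hcov2'
  have hrvalid : valid (A.get ⟨m, hmlen⟩) := h.1 _ (A.get_mem ⟨m, hmlen⟩)
  set r := A.get ⟨m, hmlen⟩ with hr
  -- the coordinate where σ fails to cover T₂
  have hc2' := hc2
  unfold Covers at hc2'
  push_neg at hc2'
  obtain ⟨i, v, hT2i, hne⟩ := hc2'
  have hri : r i = v := hcov2 i v hT2i
  cases hT1i : T₁ i with
  | some w =>
    have hw1 : σ i = w := hc1 i w hT1i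
    have hw2 : r i = w := hcov1 i w hT1i
    rw [hri] at hw2
    rw [← hw2] at hw1
    exact hne hw1
  | none =>
    have hiT1 : i ∉ supp T₁ := by
      rw [mem_supp]
      rintro ⟨w, hw⟩
      rw [hT1i] at hw
      exact Option.some_ne_none w hw.symm
    by_cases hst : strength T₁ < t
    · -- extend T₁ by σ, forcing coordinate i into the support
      have hcardins : (insert i (supp T₁)).card ≤ t := by
        rw [Finset.card_insert_of_notMem hiT1]
        rw [strength_eq] at hst
        omega
      obtain ⟨D, hTD, -, hDcard⟩ :=
        Finset.exists_subsuperset_card_eq (Finset.subset_univ (insert i (supp T₁)))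
          hcardins (by simpa using ht2)
      have hUvalid : ValidInt valid (restr σ D) := ⟨σ, hσ, covers_restr_self σ D⟩
      have hUs : strength (restr σ D) = t := by rw [strength_restr, hDcard]
      have hne' := h.2 {restr σ D} ∅ (by simp [hUvalid, hUs]) (by simp) (by simp) (by simp)
        (disting_empty hσ (covers_restr_self σ D))
      rw [rhoFin_singleton, rhoFin_empty] at hne'
      obtain ⟨n, hnlen, hncov⟩ := Set.nonempty_iff_ne_empty.2 hne'
      have hsupp1 : supp T₁ ⊆ D := (Finset.subset_insert i (supp T₁)).trans hTD
      have hnT1 : Covers (A.get ⟨n, hnlen⟩) T₁ := covers_of_covers_restr hc1 hsupp1 hncov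
      have hn2 : n ∈ rho A T₂ := by rw [← heq]; exact ⟨hnlen, hnT1⟩
      obtain ⟨hnlen2, hncov2'⟩ := hn2
      have hncov2 : Covers (A.get ⟨n, hnlen⟩) T₂ := hncov2'
      have h1 : (A.get ⟨n, hnlen⟩) i = σ i :=
        (covers_restr_iff.1 hncov) i (hTD (Finset.mem_insert_self i _))
      have h2 : (A.get ⟨n, hnlen⟩) i = v := hncov2 i v hT2i
      rw [h1] at h2
      exact hne h2
    · have hT1t : strength T₁ = t := le_antisymm hs1 (not_lt.1 hst)
      by_cases hs2t : strength T₂ = t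
      · -- both have strength exactly t: apply CLA directly
        have hne' := h.2 {T₁} {T₂} (by simp [hv1, hT1t]) (by simp [hv2, hs2t])
          (by simp) (by simp) (disting_singleton hσ hc1 hc2)
        rw [rhoFin_singleton, rhoFin_singleton] at hne'
        exact hne' heq
      · -- strength T₂ < t: pad T₂ with values of T₁ to strength t
        have hlt : strength T₂ < t := lt_of_le_of_ne hs2 hs2t
        have hcard : t - strength T₂ ≤ (supp T₁ \ supp T₂).card := by
          have h1 := Finset.card_sdiff_add_card_inter (supp T₁) (supp T₂)
          have h2 : (supp T₁ ∩ supp T₂).card ≤ (supp T₂).card :=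
            Finset.card_le_card Finset.inter_subset_right
          rw [strength_eq] at hT1t hlt
          rw [strength_eq]
          omega
        obtain ⟨B, hBsub, hBcard⟩ := Finset.exists_subset_card_eq hcard
        have hdisj : Disjoint (supp T₂) B :=
          Finset.disjoint_left.2 fun j hj2 hjB => (Finset.mem_sdiff.1 (hBsub hjB)).2 hj2
        have hDcard : (supp T₂ ∪ B).card = t := by
          rw [Finset.card_union_of_disjoint hdisj, hBcard, ← strength_eq]
          have := hs2
          omega
        set W := restr r (supp T₂ ∪ B) with hW
        have hWvalid : ValidInt valid W := ⟨r, hrvalid, covers_restr_self r _⟩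
        have hWs : strength W = t := by rw [hW, strength_restr, hDcard]
        have hWnc : ¬ Covers σ W := by
          intro hcw
          have hσi : σ i = r i :=
            (covers_restr_iff.1 hcw) i
              (Finset.mem_union_left _ (mem_supp.2 ⟨v, hT2i⟩))
          rw [hri] at hσi
          exact hne hσi
        have hne' := h.2 {T₁} {W} (by simp [hv1, hT1t]) (by simp [hWvalid, hWs])
          (by simp) (by simp) (disting_singleton hσ hc1 hWnc)
        rw [rhoFin_singleton, rhoFin_singleton] at hne'
        apply hne'
        rw [heq]
        apply Set.Subset.antisymm
        · -- every row covering T₂ (hence T₁) covers W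
          rintro n ⟨hnlen, hncov2⟩
          have hn1 : n ∈ rho A T₁ := by rw [heq]; exact ⟨hnlen, hncov2⟩
          obtain ⟨hnlen1, hncov1'⟩ := hn1
          have hncov1 : Covers (A.get ⟨n, hnlen⟩) T₁ := hncov1'
          refine ⟨hnlen, ?_⟩
          rw [hW, covers_restr_iff]
          intro j hj
          rcases Finset.mem_union.1 hj with hj2 | hjB
          · obtain ⟨w', hw'⟩ := mem_supp.1 hj2
            rw [hncov2 j w' hw', hcov2 j w' hw']
          · have hj1 : j ∈ supp T₁ := (Finset.mem_sdiff.1 (hBsub hjB)).1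
            obtain ⟨w', hw'⟩ := mem_supp.1 hj1
            rw [hncov1 j w' hw', hcov1 j w' hw']
        · exact rho_mono fun τ h' =>
            covers_of_covers_restr hcov2 Finset.subset_union_left h'

end Aux

theorem stmt10 {k : ℕ} (valid : Test k → Prop) (t : ℕ) (ht1 : 1 ≤ t) (ht2 : t ≤ k)
    (A : List (Test k)) (h : IsCLAbar1t valid t A) :
    IsCLAbar1bart valid t A := by
  refine ⟨h.1, ?_⟩
  intro 𝒯₁ 𝒯₂ hval1 hval2 hcard1 hcard2 hd
  obtain ⟨x₁, hx₁⟩ := Finset.card_le_one_iff_subset_singleton.1 hcard1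
  obtain ⟨x₂, hx₂⟩ := Finset.card_le_one_iff_subset_singleton.1 hcard2
  obtain ⟨B, hB, hBne⟩ := hd
  rcases Finset.subset_singleton_iff.1 hx₁ with h1 | h1 <;>
    rcases Finset.subset_singleton_iff.1 hx₂ with h2 | h2 <;> subst h1 <;> subst h2
  · -- ∅ vs ∅ : not distinguishable
    exact absurd rfl hBne
  · -- ∅ vs {x₂}
    rw [rhoSet_coe_singleton, Finset.coe_empty, rhoSet_empty] at hBne
    obtain ⟨n, hnlen, hncov⟩ := Set.nonempty_iff_ne_empty.2 (Ne.symm hBne)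
    have hσ : valid (B.get ⟨n, hnlen⟩) := hB _ (B.get_mem ⟨n, hnlen⟩)
    obtain ⟨hvx, hsx⟩ := hval2 x₂ (Finset.mem_singleton_self x₂)
    rw [rhoFin_empty, rhoFin_singleton]
    exact fun he => (rho_nonempty h ht2 hsx hσ hncov).ne_empty he.symm
  · -- {x₁} vs ∅
    rw [rhoSet_coe_singleton, Finset.coe_empty, rhoSet_empty] at hBne
    obtain ⟨n, hnlen, hncov⟩ := Set.nonempty_iff_ne_empty.2 hBne
    have hσ : valid (B.get ⟨n, hnlen⟩) := hB _ (B.get_mem ⟨n, hnlen⟩)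
    obtain ⟨hvx, hsx⟩ := hval1 x₁ (Finset.mem_singleton_self x₁)
    rw [rhoFin_empty, rhoFin_singleton]
    exact fun he => (rho_nonempty h ht2 hsx hσ hncov).ne_empty he
  · -- {x₁} vs {x₂}
    rw [rhoSet_coe_singleton, rhoSet_coe_singleton] at hBne
    obtain ⟨hv1, hs1⟩ := hval1 x₁ (Finset.mem_singleton_self x₁)
    obtain ⟨hv2, hs2⟩ := hval2 x₂ (Finset.mem_singleton_self x₂)
    rw [rhoFin_singleton, rhoFin_singleton]
    by_cases hsub : rho B x₁ ⊆ rho B x₂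
    · have hnsub : ¬ rho B x₂ ⊆ rho B x₁ := fun h' => hBne (hsub.antisymm h')
      obtain ⟨n, hn2, hn1⟩ := Set.not_subset.1 hnsub
      obtain ⟨hnlen, hncov⟩ := hn2
      have hσ : valid (B.get ⟨n, hnlen⟩) := hB _ (B.get_mem ⟨n, hnlen⟩)
      have hnc1 : ¬ Covers (B.get ⟨n, hnlen⟩) x₁ := fun hc => hn1 ⟨hnlen, hc⟩
      exact (rho_ne h ht2 hv2 hs2 hv1 hs1 hσ hncov hnc1).symm
    · obtain ⟨n, hn1, hn2⟩ := Set.not_subset.1 hsub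
      obtain ⟨hnlen, hncov⟩ := hn1
      have hσ : valid (B.get ⟨n, hnlen⟩) := hB _ (B.get_mem ⟨n, hnlen⟩)
      have hnc2 : ¬ Covers (B.get ⟨n, hnlen⟩) x₂ := fun hc => hn2 ⟨hnlen, hc⟩
      exact rho_ne h ht2 hv1 hs1 hv2 hs2 hσ hncov hnc2
end

section
/- Let A be a (t+1)-constrained covering array. Let T_a and T_b be valid interactions of strength at most t that agree on all common factors (or share no factors). If some valid test σ covers T_a but not T_b, then there is a row of A covering T_a but not T_b; hence ρ_A(T_a) ≠ ρ_A(T_b). -/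
/-- A is an s-CCA (covering every valid interaction of strength at most s). -/
def IsCCAle {k : ℕ} (valid : Test k → Prop) (s : ℕ) (A : List (Test k)) : Prop :=
  ValidArray valid A ∧
  ∀ T : Interaction k, ValidInt valid T → strength T ≤ s → rho A T ≠ ∅

theorem stmt12 {k : ℕ} (valid : Test k → Prop) (t : ℕ) (A : List (Test k))
    (hA : IsCCAle valid (t + 1) A)
    (Ta Tb : Interaction k) (hva : ValidInt valid Ta) (hvb : ValidInt valid Tb)
    (hsa : strength Ta ≤ t) (hsb : strength Tb ≤ t)
    (hagree : ∀ i v w, Ta i = some v → Tb i = some w → v = w)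
    (σ : Test k) (hσ : valid σ) (hca : Covers σ Ta) (hcb : ¬ Covers σ Tb) :
    (∃ n ∈ rho A Ta, n ∉ rho A Tb) ∧ rho A Ta ≠ rho A Tb := by
  -- find j where σ disagrees with Tb
  unfold Covers at hcb
  push_neg at hcb
  obtain ⟨j, v, hjv, hjne⟩ := hcb
  have hTaj : Ta j = none := by
    cases hTa : Ta j with
    | none => rfl
    | some w =>
      exfalso
      have hw := hca j w hTa
      exact hjne ((hagree j w v hTa hjv) ▸ hw)
  -- extended interaction
  set T' : Interaction k := Function.update Ta j (some (σ j)) with hT'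
  have hcov' : Covers σ T' := by
    intro i w hi
    by_cases hij : i = j
    · subst hij
      have hi := (Function.update_self i (some (σ i)) Ta).symm.trans hi; simp only [Option.some.injEq] at hi
      omega
    · exact hca i w ((Function.update_of_ne hij _ Ta).symm.trans hi)
  have hstr : strength T' ≤ t + 1 := by
    have : (Finset.univ.filter (fun i => (T' i).isSome)) ⊆
        insert j (Finset.univ.filter (fun i => (Ta i).isSome)) := by
      intro i hi
      simp only [Finset.mem_filter, Finset.mem_univ, true_and] at hi
      by_cases hij : i = j
      · subst hij; exact Finset.mem_insert_self _ _
      · refine Finset.mem_insert_of_mem ?_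
        simp only [Finset.mem_filter, Finset.mem_univ, true_and]
        exact (congrArg Option.isSome (Function.update_of_ne hij (some (σ j)) Ta)).symm.trans hi
    calc strength T' ≤ (insert j (Finset.univ.filter (fun i => (Ta i).isSome))).card :=
          Finset.card_le_card this
      _ ≤ (Finset.univ.filter (fun i => (Ta i).isSome)).card + 1 := Finset.card_insert_le _ _
      _ ≤ t + 1 := Nat.add_le_add_right hsa 1
  have hne := hA.2 T' ⟨σ, hσ, hcov'⟩ hstr
  obtain ⟨n, hn⟩ := Set.nonempty_iff_ne_empty.mpr hne
  obtain ⟨hlt, hnc⟩ := hn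
  have hrowj : (A.get ⟨n, hlt⟩) j = σ j := hnc j (σ j) (Function.update_self j (some (σ j)) Ta)
  have hcovTa : Covers (A.get ⟨n, hlt⟩) Ta := by
    intro i w hi
    have hij : i ≠ j := fun h => by rw [h, hTaj] at hi; cases hi
    exact hnc i w ((Function.update_of_ne hij _ Ta).trans hi)
  have hmem : n ∈ rho A Ta := ⟨hlt, hcovTa⟩
  have hnotb : n ∉ rho A Tb := by
    rintro ⟨hlt', hcb'⟩
    exact hjne (hrowj ▸ hcb' j v hjv)
  exact ⟨⟨n, hmem, hnotb⟩, fun h => hnotb (h ▸ hmem)⟩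
end
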